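/- Let f(y) = √(4−y)/(2π√y) for 0 < y < 4. Then for every n ≥ 0, ∫₀⁴ yⁿ·f(y) dy = Cat(n), the n-th Catalan number. -/

import Mathlib

open Real Set MeasureTheory intervalIntegral

lemma sinPowInt (n : ℕ) :
    ∫ x in (0:ℝ)..(π/2), Real.sin x ^ (2*n) = π/2 * (Nat.centralBinom n) / 4^n := by
  induction n with
  | zero => simp
  | succ k ih =>
    have h2 : 2 * (k+1) = 2*k + 2 := by ring
    rw [h2, integral_sin_pow, ih]
    have hcb : ((k:ℝ)+1) * (Nat.centralBinom (k+1)) = 2*(2*(k:ℝ)+1) * Nat.centralBinom k := by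
      exact_mod_cast Nat.succ_mul_centralBinom_succ k
    simp only [Real.sin_zero, Real.cos_pi_div_two]
    push_cast
    have h4 : (0:ℝ) < 4 ^ k := by positivity
    field_simp
    ring_nf
    rw [show (1+k)=(k+1) from by ring]
    linear_combination (-2 * π * 4 ^ k) * hcb

lemma g_integrableOn : ∀ n : ℕ, IntegrableOn
    (fun y : ℝ => y ^ n * (Real.sqrt (4 - y) / (2 * π * Real.sqrt y))) (Icc (0:ℝ) 4) := by
  intro n
  rw [integrableOn_Icc_iff_integrableOn_Ioc]
  have hφ : IntegrableOn (fun y : ℝ => (4:ℝ) ^ n / π * y ^ (-(1/2) : ℝ)) (Ioc (0:ℝ) 4) := by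
    have := (intervalIntegrable_rpow' (a := 0) (b := 4) (r := -(1/2)) (by norm_num))
    rw [intervalIntegrable_iff_integrableOn_Ioc_of_le (by norm_num)] at this
    exact this.const_mul _
  refine Integrable.mono hφ ?_ ?_
  · have hc : ContinuousOn (fun y : ℝ => y ^ n * (Real.sqrt (4 - y) / (2 * π * Real.sqrt y)))
        (Ioc (0:ℝ) 4) := by
      apply ContinuousOn.mul (by fun_prop)
      apply ContinuousOn.div (by fun_prop) (by fun_prop)
      intro y hy
      have : 0 < Real.sqrt y := Real.sqrt_pos.2 hy.1
      positivity
    exact hc.aestronglyMeasurable measurableSet_Ioc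
  · refine (ae_restrict_iff' measurableSet_Ioc).2 (Filter.Eventually.of_forall ?_)
    intro y hy
    obtain ⟨hy0, hy4⟩ := hy
    have hs : 0 < Real.sqrt y := Real.sqrt_pos.2 hy0
    have h1 : Real.sqrt (4 - y) ≤ 2 := by
      rw [show (2:ℝ) = Real.sqrt 4 by rw [show (4:ℝ) = 2^2 by norm_num, Real.sqrt_sq]; norm_num]
      exact Real.sqrt_le_sqrt (by linarith)
    have h2 : y ^ n ≤ 4 ^ n := pow_le_pow_left₀ hy0.le hy4 n
    have hrw : y ^ (-(1/2) : ℝ) = 1 / Real.sqrt y := by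
      rw [Real.rpow_neg hy0.le, Real.sqrt_eq_rpow]
      simp [one_div]
    have hnn : (0:ℝ) ≤ y ^ n * (Real.sqrt (4 - y) / (2 * π * Real.sqrt y)) := by positivity
    have hπ := Real.pi_pos
    rw [Real.norm_of_nonneg hnn, Real.norm_of_nonneg (by rw [hrw]; positivity), hrw,
      show y ^ n * (Real.sqrt (4 - y) / (2 * π * Real.sqrt y))
          = (y ^ n * Real.sqrt (4 - y)) / (2 * π * Real.sqrt y) from by ring,
      show (4:ℝ) ^ n / π * (1 / Real.sqrt y) = ((4:ℝ) ^ n * 2) / (2 * π * Real.sqrt y) from by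
        field_simp]
    gcongr

lemma pointwise_eq (n : ℕ) {x : ℝ} (hx : x ∈ Ioc (0:ℝ) (π/2)) :
    (8 * Real.sin x * Real.cos x) •
      ((4 * Real.sin x ^ 2) ^ n *
        (Real.sqrt (4 - 4 * Real.sin x ^ 2) / (2 * π * Real.sqrt (4 * Real.sin x ^ 2)))) =
    4 ^ (n+1) / π * (Real.sin x ^ (2*n) * Real.cos x ^ 2) := by
  obtain ⟨hx0, hx2⟩ := hx
  have hπ := Real.pi_pos
  have hs : 0 < Real.sin x := Real.sin_pos_of_pos_of_lt_pi hx0 (lt_of_le_of_lt hx2 (by linarith))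
  have hc : 0 ≤ Real.cos x := Real.cos_nonneg_of_mem_Icc ⟨by linarith, hx2⟩
  have e1 : Real.sqrt (4 * Real.sin x ^ 2) = 2 * Real.sin x := by
    rw [show 4 * Real.sin x ^ 2 = (2 * Real.sin x)^2 by ring, Real.sqrt_sq (by positivity)]
  have e2 : Real.sqrt (4 - 4 * Real.sin x ^ 2) = 2 * Real.cos x := by
    rw [show 4 - 4 * Real.sin x ^ 2 = (2 * Real.cos x)^2 by
        have := Real.sin_sq_add_cos_sq x; nlinarith,
      Real.sqrt_sq (by positivity)]
  rw [e1, e2, smul_eq_mul, mul_pow, ← pow_mul]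
  field_simp
  ring

/-- The density f(y) = √(4-y)/(2π√y) on (0,4) has the Catalan numbers as moments:
∫₀⁴ yⁿ f(y) dy = Cat(n). -/
theorem stmt13 (n : ℕ) :
    ∫ y in (0:ℝ)..4, y ^ n * (Real.sqrt (4 - y) / (2 * Real.pi * Real.sqrt y)) =
      (catalan n : ℝ) := by
  have hπ := Real.pi_pos
  have hab : (0:ℝ) ≤ π/2 := by positivity
  set g : ℝ → ℝ := fun y => y ^ n * (Real.sqrt (4 - y) / (2 * π * Real.sqrt y)) with hgdef
  set f : ℝ → ℝ := fun θ => 4 * Real.sin θ ^ 2 with hfdef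
  set f' : ℝ → ℝ := fun θ => 8 * Real.sin θ * Real.cos θ with hf'def
  have hd : ∀ x : ℝ, HasDerivAt f (f' x) x := by
    intro x
    have h := ((Real.hasDerivAt_sin x).pow 2).const_mul (4:ℝ)
    refine h.congr_deriv ?_
    simp [hf'def]; ring
  have himoo : f '' Ioo 0 (π/2) ⊆ Ioc (0:ℝ) 4 := by
    rintro _ ⟨x, hx, rfl⟩
    have hs : 0 < Real.sin x := Real.sin_pos_of_pos_of_lt_pi hx.1 (lt_of_lt_of_le hx.2 (by linarith))
    have hs1 : Real.sin x ≤ 1 := Real.sin_le_one x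
    constructor
    · simp only [hfdef]; positivity
    · simp only [hfdef]; nlinarith
  have himic : f '' uIcc 0 (π/2) ⊆ Icc (0:ℝ) 4 := by
    rintro _ ⟨x, _, rfl⟩
    have h1 : Real.sin x ^ 2 ≤ 1 := by
      have := Real.neg_one_le_sin x; have := Real.sin_le_one x; nlinarith
    constructor
    · simp only [hfdef]; positivity
    · simp only [hfdef]; nlinarith
  have hgcont : ContinuousOn g (Ioc (0:ℝ) 4) := by
    apply ContinuousOn.mul (by fun_prop)
    apply ContinuousOn.div (by fun_prop) (by fun_prop)
    intro y hy
    have : 0 < Real.sqrt y := Real.sqrt_pos.2 hy.1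
    positivity
  have hg1 : IntegrableOn g (f '' uIcc 0 (π/2)) := (g_integrableOn n).mono_set himic
  have hmin : min (0:ℝ) (π/2) = 0 := min_eq_left hab
  have hmax : max (0:ℝ) (π/2) = π/2 := max_eq_right hab
  have hcont2 : Continuous (fun x : ℝ => 4 ^ (n+1) / π * (Real.sin x ^ (2*n) * Real.cos x ^ 2)) :=
    by fun_prop
  have hg2 : IntegrableOn (fun x => f' x • (g ∘ f) x) (uIcc 0 (π/2)) := by
    rw [uIcc_of_le hab, integrableOn_Icc_iff_integrableOn_Ioc]
    refine (hcont2.integrableOn_Ioc).congr_fun ?_ measurableSet_Ioc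
    intro x hx
    exact (pointwise_eq n hx).symm
  have hsub := intervalIntegral.integral_comp_smul_deriv''' (a := (0:ℝ)) (b := π/2)
    (f := f) (f' := f') (g := g)
    ((by fun_prop : Continuous f).continuousOn)
    (by rw [hmin, hmax]; exact fun x hx => (hd x).hasDerivWithinAt)
    (by rw [hmin, hmax]; exact hgcont.mono himoo)
    hg1 hg2
  have hf0 : f 0 = 0 := by simp [hfdef]
  have hfb : f (π/2) = 4 := by simp [hfdef]
  rw [hf0, hfb] at hsub
  have hcongr : ∫ x in (0:ℝ)..(π/2), f' x • (g ∘ f) x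
      = ∫ x in (0:ℝ)..(π/2), 4 ^ (n+1) / π * (Real.sin x ^ (2*n) * Real.cos x ^ 2) := by
    apply intervalIntegral.integral_congr_ae
    refine Filter.Eventually.of_forall ?_
    intro x hx
    rw [uIoc_of_le hab] at hx
    exact pointwise_eq n hx
  rw [← hsub, hcongr]
  rw [intervalIntegral.integral_const_mul]
  have hsplit : ∫ x in (0:ℝ)..(π/2), Real.sin x ^ (2*n) * Real.cos x ^ 2
      = (∫ x in (0:ℝ)..(π/2), Real.sin x ^ (2*n))
        - ∫ x in (0:ℝ)..(π/2), Real.sin x ^ (2*(n+1)) := by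
    rw [← intervalIntegral.integral_sub (by apply Continuous.intervalIntegrable; fun_prop)
      (by apply Continuous.intervalIntegrable; fun_prop)]
    apply intervalIntegral.integral_congr
    intro x _
    linear_combination (Real.sin x ^ (2*n)) * Real.sin_sq_add_cos_sq x
  rw [hsplit, sinPowInt n, sinPowInt (n+1)]
  have hcb : ((n:ℝ)+1) * (Nat.centralBinom (n+1)) = 2*(2*(n:ℝ)+1) * Nat.centralBinom n := by
    exact_mod_cast Nat.succ_mul_centralBinom_succ n
  have hcat : ((n:ℝ)+1) * (catalan n : ℝ) = Nat.centralBinom n := by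
    exact_mod_cast succ_mul_catalan_eq_centralBinom n
  have h4 : (0:ℝ) < 4 ^ n := by positivity
  have hn1 : ((n:ℝ)+1) ≠ 0 := by positivity
  have key : (4:ℝ) * Nat.centralBinom n - Nat.centralBinom (n+1) = 2 * catalan n := by
    have h : ((n:ℝ)+1) * ((4:ℝ) * Nat.centralBinom n - Nat.centralBinom (n+1))
        = ((n:ℝ)+1) * (2 * (catalan n : ℝ)) := by linear_combination -hcb - 2 * hcat
    exact mul_left_cancel₀ hn1 h
  field_simp
  linear_combination ((4:ℝ)^n) * key
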